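/- Let G be a nonempty r-chromatic graph with adjacency matrix A. Then μ_min(A) ≤ −μ(A)/(r−1), where μ(A) is the largest and μ_min(A) the smallest eigenvalue of A. -/

import Mathlib

open Matrix SimpleGraph Pointwise

noncomputable def maxEigR {n : ℕ} (A : Matrix (Fin n) (Fin n) ℝ) : ℝ :=
  sSup (spectrum ℝ A)

noncomputable def minEigR {n : ℕ} (A : Matrix (Fin n) (Fin n) ℝ) : ℝ :=
  sInf (spectrum ℝ A)

/-- Rayleigh-type lower bound for the smallest eigenvalue. -/
theorem rayleigh_min_aux {n : ℕ} (A : Matrix (Fin n) (Fin n) ℝ) (hA : A.IsHermitian)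
    (y : Fin n → ℝ) : sInf (spectrum ℝ A) * (y ⬝ᵥ y) ≤ y ⬝ᵥ (A *ᵥ y) := by
  set m := sInf (spectrum ℝ A) with hm
  have hB : (A - m • 1).IsHermitian := by
    unfold Matrix.IsHermitian
    rw [conjTranspose_sub, conjTranspose_smul, conjTranspose_one, hA.eq, star_trivial]
  have hspec : spectrum ℝ A = Set.range hA.eigenvalues := hA.spectrum_real_eq_range_eigenvalues
  have hfin : (spectrum ℝ A).Finite := hspec ▸ Set.finite_range _
  have hbdd : BddBelow (spectrum ℝ A) := hfin.bddBelow
  have hset : spectrum ℝ (A - m • 1) = spectrum ℝ A - ({m} : Set ℝ) := by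
    rw [show A - m • 1 = A - algebraMap ℝ _ m by rw [Algebra.algebraMap_eq_smul_one],
      spectrum.sub_singleton_eq]
  have hps : (A - m • 1).PosSemidef := by
    apply hB.posSemidef_iff_eigenvalues_nonneg.mpr
    intro i
    have hmem : hB.eigenvalues i ∈ spectrum ℝ (A - m • 1) := hB.eigenvalues_mem_spectrum_real i
    rw [hset] at hmem
    obtain ⟨z, hz, w, hw, hzw⟩ := hmem
    simp only [Set.mem_singleton_iff] at hw
    subst hw
    have := csInf_le hbdd hz
    rw [← hzw]; simp only [Pi.zero_apply]; linarith
  have := hps.dotProduct_mulVec_nonneg y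
  simp only [star_trivial, sub_mulVec, dotProduct_sub, smul_mulVec, one_mulVec,
    dotProduct_smul, smul_eq_mul] at this
  linarith

/-- Existence of an eigenvector for the largest eigenvalue. -/
theorem max_eig_vec_aux {n : ℕ} [NeZero n] (A : Matrix (Fin n) (Fin n) ℝ)
    (hA : A.IsHermitian) : ∃ x : Fin n → ℝ, x ≠ 0 ∧ A *ᵥ x = sSup (spectrum ℝ A) • x := by
  have hspec : spectrum ℝ A = Set.range hA.eigenvalues := hA.spectrum_real_eq_range_eigenvalues
  have hfin : (spectrum ℝ A).Finite := hspec ▸ Set.finite_range _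
  have hne : (spectrum ℝ A).Nonempty := hspec ▸ Set.range_nonempty _
  have hmem : sSup (spectrum ℝ A) ∈ spectrum ℝ A := hne.csSup_mem hfin
  rw [hspec] at hmem
  obtain ⟨i, hi⟩ := hmem
  refine ⟨⇑(hA.eigenvectorBasis i), ?_, ?_⟩
  · have hnorm := (hA.eigenvectorBasis).orthonormal.1 i
    intro h
    have : (hA.eigenvectorBasis i : EuclideanSpace ℝ (Fin n)) = 0 := by
      ext j; exact congrFun h j
    rw [this] at hnorm; simp at hnorm
  · rw [hA.mulVec_eigenvectorBasis, hi, hspec]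

/-- For a nonempty `r`-chromatic graph, `μ_min(A) ≤ −μ(A)/(r−1)`. -/
theorem stmt10 {n r : ℕ} (G : SimpleGraph (Fin n)) [DecidableRel G.Adj]
    (hedge : ∃ u v, G.Adj u v) (hr : 2 ≤ r) (hχ : G.chromaticNumber = (r : ℕ∞)) :
    minEigR (G.adjMatrix ℝ) ≤ - maxEigR (G.adjMatrix ℝ) / ((r : ℝ) - 1) := by
  obtain ⟨u0, v0, huv⟩ := hedge
  have hnz : NeZero n := ⟨by rintro rfl; exact u0.elim0⟩
  set A := G.adjMatrix ℝ with hA'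
  have hA : A.IsHermitian := by
    ext i j
    rw [Matrix.conjTranspose_apply, star_trivial]
    exact congrFun (congrFun (isSymm_adjMatrix G) i) j
  obtain ⟨C⟩ : G.Colorable r := (chromaticNumber_le_iff_colorable).mp (le_of_eq hχ)
  set μ := sSup (spectrum ℝ A) with hμ
  set m := sInf (spectrum ℝ A) with hm
  obtain ⟨x, hx0, hxe⟩ := max_eig_vec_aux A hA
  set xc : Fin r → Fin n → ℝ := fun c v => if C v = c then x v else 0 with hxc
  set t : Fin r → ℝ := fun c => xc c ⬝ᵥ xc c with ht
  set s : ℝ := x ⬝ᵥ x with hs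
  have hspos : 0 < s := by
    have := dotProduct_self_star_pos_iff.mpr hx0
    rwa [star_trivial] at this
  have f1 : ∀ c, x ⬝ᵥ xc c = t c := by
    intro c
    unfold dotProduct
    refine Finset.sum_congr rfl fun v _ => ?_
    by_cases h : C v = c <;> simp [hxc, h]
  have f1' : ∀ c, xc c ⬝ᵥ x = t c := fun c => (dotProduct_comm _ _).trans (f1 c)
  have f2 : ∀ c, xc c ⬝ᵥ (A *ᵥ xc c) = 0 := by
    intro c
    simp only [Matrix.mulVec, dotProduct, Finset.mul_sum]
    refine Finset.sum_eq_zero fun u _ => Finset.sum_eq_zero fun v _ => ?_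
    by_cases hadj : G.Adj u v
    · by_cases hcu : C u = c
      · have hcv : C v ≠ c := fun hcv => C.valid hadj (by rw [hcu, hcv])
        simp [hxc, hcv]
      · simp [hxc, hcu]
    · simp [hA', hadj]
  have f3 : ∀ c, xc c ⬝ᵥ (A *ᵥ x) = μ * t c := by
    intro c
    rw [hxe, dotProduct_smul, smul_eq_mul, f1']
  have hAsymm : Aᵀ = A := isSymm_adjMatrix G
  have f4 : ∀ c, x ⬝ᵥ (A *ᵥ xc c) = μ * t c := by
    intro c
    rw [dotProduct_mulVec, ← mulVec_transpose, hAsymm, hxe, smul_dotProduct, smul_eq_mul, f1,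
      ← hμ]
  have fxx : x ⬝ᵥ (A *ᵥ x) = μ * s := by
    rw [hxe, dotProduct_smul, smul_eq_mul, ← hs]
  have f5 : (∑ c, t c) = s := by
    have hptw : ∀ v, (∑ c, xc c v) = x v := by
      intro v
      simp [hxc]
    calc (∑ c, t c) = ∑ c, ∑ v, x v * xc c v := by
          refine Finset.sum_congr rfl fun c _ => ?_
          rw [← f1 c]; rfl
      _ = ∑ v, ∑ c, x v * xc c v := Finset.sum_comm
      _ = ∑ v, x v * x v := by
          refine Finset.sum_congr rfl fun v _ => ?_
          rw [← Finset.mul_sum, hptw]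
      _ = s := rfl
  -- Rayleigh applied to w_c = x - r • xc c, summed over colors
  have key : ∀ c : Fin r, m * (s - 2 * r * t c + r ^ 2 * t c) ≤ μ * s - 2 * r * (μ * t c) := by
    intro c
    have h := rayleigh_min_aux A hA (x - (r : ℝ) • xc c)
    rw [← hm] at h
    have ftt : ∀ c, xc c ⬝ᵥ xc c = t c := fun _ => rfl
    have hdot : (x - (r : ℝ) • xc c) ⬝ᵥ (x - (r : ℝ) • xc c)
        = s - 2 * r * t c + r ^ 2 * t c := by
      simp only [sub_dotProduct, dotProduct_sub, smul_dotProduct, dotProduct_smul,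
        smul_eq_mul, f1, f1', ftt, ← hs]
      ring
    have hquad : (x - (r : ℝ) • xc c) ⬝ᵥ (A *ᵥ (x - (r : ℝ) • xc c))
        = μ * s - 2 * r * (μ * t c) := by
      simp only [mulVec_sub, mulVec_smul, sub_dotProduct, dotProduct_sub, smul_dotProduct,
        dotProduct_smul, smul_eq_mul, fxx, f4, f3, f2, mul_zero]
      ring
    rw [hdot, hquad] at h
    exact h
  have hsum := Finset.sum_le_sum (fun c (_ : c ∈ Finset.univ) => key c)
  have hL : (∑ c : Fin r, m * (s - 2 * r * t c + r ^ 2 * t c))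
      = m * (r * s - 2 * r * s + r ^ 2 * s) := by
    rw [← Finset.mul_sum]
    congr 1
    rw [Finset.sum_add_distrib, Finset.sum_sub_distrib, Finset.sum_const, ← Finset.mul_sum,
      ← Finset.mul_sum, f5]
    simp [mul_comm]
  have hR : (∑ c : Fin r, (μ * s - 2 * r * (μ * t c)))
      = r * (μ * s) - 2 * r * (μ * s) := by
    rw [Finset.sum_sub_distrib, Finset.sum_const, ← Finset.mul_sum, ← Finset.mul_sum, f5]
    simp [mul_comm]
  rw [hL, hR] at hsum
  have hrpos : (0 : ℝ) < r := by positivity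
  have hr1 : (1 : ℝ) ≤ (r : ℝ) - 1 := by
    have : (2 : ℝ) ≤ r := by exact_mod_cast hr
    linarith
  have hr1pos : (0 : ℝ) < (r : ℝ) - 1 := by linarith
  have hkey : m * ((r : ℝ) - 1) ≤ -μ := by
    have hrs : (0 : ℝ) < (r : ℝ) * s := by positivity
    nlinarith [hsum, hrs]
  rw [show minEigR A = m from rfl, show maxEigR A = μ from rfl, le_div_iff₀ hr1pos]
  linarith
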